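/- There exists a family of 2^𝔠 pairwise distinct subfields of ℝ whose sets of squares are pairwise distinct; consequently, there exist 2^𝔠 many subfields K ⊆ ℝ such that the set of squares {y² | y ∈ K} is not a Borel subset of ℝ. -/

import Mathlib

open Cardinal Set


section trans

variable {F A : Type*} [CommRing F] [CommRing A] [Algebra F A]

theorem aux_transcendental_adjoin {s : Set A}
    (hs : AlgebraicIndependent F ((↑) : s → A)) {t : Set A} (hts : t ⊆ s) {a : A}
    (ha : a ∈ s) (ha' : a ∉ t) : Transcendental (Algebra.adjoin F t) a := by
  classical
  have h1 := hs.mono (Set.insert_subset ha hts)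
  have h2 := h1.comp (Set.subtypeInsertEquivOption ha').symm
    (Set.subtypeInsertEquivOption ha').symm.injective
  have ht : AlgebraicIndependent F ((↑) : t → A) := hs.mono hts
  have h3 : (AlgebraicIndependent F fun o : Option t => o.elim a (↑)) := by
    convert h2 using 1
    funext o
    cases o <;> simp [Set.subtypeInsertEquivOption]
  have h4 := (ht.option_iff_transcendental a).1 h3
  rwa [Subtype.range_coe] at h4

end trans

theorem aux_isAlgebraic_of_mem_closure {E : Type*} [Field E] (F : Type*) [Field F] [Algebra F E]
    {t : Set E} {a : E} (h : a ∈ Subfield.closure t) : IsAlgebraic (Algebra.adjoin F t) a := by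
  rw [Subfield.mem_closure_iff] at h
  obtain ⟨y, hy, z, hz, hzy⟩ := h
  have hsub : Subring.closure t ≤ (Algebra.adjoin F t).toSubring :=
    Subring.closure_le.2 Algebra.subset_adjoin
  have hy' : y ∈ Algebra.adjoin F t := hsub hy
  have hz' : z ∈ Algebra.adjoin F t := hsub hz
  by_cases hz0 : z = 0
  · have : a = 0 := by rw [← hzy, hz0, div_zero]
    rw [this]
    exact isAlgebraic_zero
  · refine ⟨Polynomial.C ⟨z, hz'⟩ * Polynomial.X - Polynomial.C ⟨y, hy'⟩, ?_, ?_⟩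
    · intro h0
      have := congrArg (fun p => Polynomial.coeff p 1) h0
      simp at this
      exact hz0 (congrArg Subtype.val this)
    · have hya : y = a * z := by rw [← hzy]; field_simp
      simp only [map_sub, map_mul, Polynomial.aeval_C, Polynomial.aeval_X]
      show (z : E) * a - (y : E) = 0
      rw [hya]; ring

/-- The cardinality of a transcendence basis of `ℝ` over `ℚ` is the continuum. -/
theorem aux_mk_basis {B : Set ℝ} (hB : IsTranscendenceBasis ℚ ((↑) : B → ℝ)) : #B = 𝔠 := by
  refine le_antisymm (Cardinal.mk_real ▸ mk_set_le B) ?_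
  haveI : NoZeroSMulDivisors ↥(Algebra.adjoin ℚ (Set.range ((↑) : B → ℝ))) ℝ :=
    ⟨fun {c x} h => by
      rcases mul_eq_zero.1 (show (c : ℝ) * x = 0 from h) with h | h
      · exact Or.inl (Subtype.ext h)
      · exact Or.inr h⟩
  haveI := hB.isAlgebraic
  have h1 : #ℝ ≤ max #↥(Algebra.adjoin ℚ (Set.range ((↑) : B → ℝ))) ℵ₀ :=
    Algebra.IsAlgebraic.cardinalMk_le_max _ _
  have h2 : #↥(Algebra.adjoin ℚ (Set.range ((↑) : B → ℝ))) ≤ max (max #ℚ #B) ℵ₀ := by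
    rw [Algebra.adjoin_range_eq_range_aeval]
    refine le_trans ?_ MvPolynomial.cardinalMk_le_max
    exact Cardinal.mk_le_of_surjective (f := (MvPolynomial.aeval ((↑) : B → ℝ)).rangeRestrict)
      (AlgHom.rangeRestrict_surjective _)
  have h3 : 𝔠 ≤ ℵ₀ ∨ 𝔠 ≤ #B := by
    have := (Cardinal.mk_real ▸ h1).trans (max_le_max_right ℵ₀ h2)
    simpa [Cardinal.mkRat, max_assoc] using this
  rcases h3 with h | h
  · exact absurd h (not_le.2 Cardinal.aleph0_lt_continuum)
  · exact h


/-- There is a family of `2^𝔠` pairwise distinct subfields of `ℝ` whose sets of squares are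
pairwise distinct; consequently, there are `2^𝔠` many subfields `K ⊆ ℝ` whose set of squares
`{y² | y ∈ K}` is not a Borel subset of `ℝ`. -/
theorem exists_two_pow_continuum_subfields_with_nonBorel_squares :
    (∃ (ι : Type) (F : ι → Subfield ℝ), #ι = 2 ^ Cardinal.continuum ∧
      Function.Injective F ∧
      (∀ i j : ι, i ≠ j →
        {x : ℝ | ∃ y ∈ F i, x = y ^ 2} ≠ {x : ℝ | ∃ y ∈ F j, x = y ^ 2})) ∧
    2 ^ Cardinal.continuum ≤
      #{K : Subfield ℝ // ¬ MeasurableSet {x : ℝ | ∃ y ∈ K, x = y ^ 2}} := by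
  obtain ⟨B, hB⟩ := exists_isTranscendenceBasis ℚ ℝ
  have hBcard : #B = 𝔠 := aux_mk_basis hB
  set ι : Type := Set ↥B with hι
  set F : ι → Subfield ℝ := fun S => Subfield.closure (Subtype.val '' S) with hF
  have hιcard : #ι = 2 ^ 𝔠 := by rw [hι, Cardinal.mk_set, hBcard]
  -- key: element of S not in T distinguishes square sets
  have key : ∀ (S T : ι) (b : ↥B), b ∈ S → b ∉ T →
      {x : ℝ | ∃ y ∈ F S, x = y ^ 2} ≠ {x : ℝ | ∃ y ∈ F T, x = y ^ 2} := by
    intro S T b hbS hbT heq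
    have h1 : ((b : ℝ)) ^ 2 ∈ {x : ℝ | ∃ y ∈ F S, x = y ^ 2} :=
      ⟨b, Subfield.subset_closure (Set.mem_image_of_mem _ hbS), rfl⟩
    rw [heq] at h1
    obtain ⟨y, hy, hy2⟩ := h1
    have hmem : (b : ℝ) ∈ Subfield.closure (Subtype.val '' T) := by
      rcases sq_eq_sq_iff_eq_or_eq_neg.1 hy2.symm with h | h
      · rwa [← h]
      · rw [show (b : ℝ) = -y by rw [h, neg_neg]]
        exact (Subfield.closure _).neg_mem hy
    have halg : IsAlgebraic (Algebra.adjoin ℚ (Subtype.val '' T)) (b : ℝ) :=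
      aux_isAlgebraic_of_mem_closure ℚ hmem
    have htrans : Transcendental (Algebra.adjoin ℚ (Subtype.val '' T)) (b : ℝ) := by
      refine aux_transcendental_adjoin hB.1 ?_ b.2 ?_
      · rintro _ ⟨x, -, rfl⟩; exact x.2
      · rintro ⟨x, hxT, hxb⟩
        exact hbT (by rwa [Subtype.val_injective hxb] at hxT)
    exact htrans halg
  have hne : ∀ i j : ι, i ≠ j →
      {x : ℝ | ∃ y ∈ F i, x = y ^ 2} ≠ {x : ℝ | ∃ y ∈ F j, x = y ^ 2} := by
    intro i j hij
    by_cases hsub : i ⊆ j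
    · obtain ⟨b, hbj, hbi⟩ := Set.not_subset.1 (fun h => hij (Set.Subset.antisymm hsub h))
      exact fun h => key j i b hbj hbi h.symm
    · obtain ⟨b, hbi, hbj⟩ := Set.not_subset.1 hsub
      exact key i j b hbi hbj
  have hFinj : Function.Injective F := by
    intro i j hFij
    by_contra hij
    exact hne i j hij (by rw [hFij])
  refine ⟨⟨ι, F, hιcard, hFinj, hne⟩, ?_⟩
  -- cardinality of measurable sets of ℝ is at most continuum
  have hmeas : #{t : Set ℝ | MeasurableSet t} ≤ 𝔠 := by
    have hgen : (Real.measurableSpace : MeasurableSpace ℝ) =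
        MeasurableSpace.generateFrom (Set.range (Set.Iio : ℝ → Set ℝ)) := by
      rw [BorelSpace.measurable_eq (α := ℝ), borel_eq_generateFrom_Iio]
    have hle : #(Set.range (Set.Iio : ℝ → Set ℝ)) ≤ 𝔠 :=
      Cardinal.mk_range_le.trans (le_of_eq Cardinal.mk_real)
    have := MeasurableSpace.cardinal_measurableSet_le_continuum (α := ℝ) hle
    have hsets : {t : Set ℝ | MeasurableSet t} = {t : Set ℝ | @MeasurableSet ℝ
        (MeasurableSpace.generateFrom (Set.range (Set.Iio : ℝ → Set ℝ))) t} := by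
      rw [← hgen]
    exact hsets ▸ this
  set M : Set ι := {i : ι | MeasurableSet {x : ℝ | ∃ y ∈ F i, x = y ^ 2}} with hM
  have hMcard : #M ≤ 𝔠 := by
    refine le_trans (Cardinal.mk_le_of_injective
      (f := fun i : M => (⟨{x : ℝ | ∃ y ∈ F i.1, x = y ^ 2}, i.2⟩ :
        {t : Set ℝ | MeasurableSet t})) ?_) hmeas
    intro i j h
    have hsq := congrArg Subtype.val h
    simp only at hsq
    by_contra hij
    have : i.1 ≠ j.1 := fun h' => hij (Subtype.ext h')
    exact hne i.1 j.1 this hsq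
  have h2c : ℵ₀ ≤ (2 : Cardinal) ^ 𝔠 :=
    Cardinal.aleph0_le_continuum.trans (Cardinal.cantor 𝔠).le
  have hMc : (2 : Cardinal) ^ 𝔠 ≤ #(Mᶜ : Set ι) := by
    by_contra hlt
    rw [not_le] at hlt
    have hsum : #M + #(Mᶜ : Set ι) = (2 : Cardinal) ^ 𝔠 := by
      rw [Cardinal.mk_sum_compl, hιcard]
    have hMlt : #M < (2 : Cardinal) ^ 𝔠 := hMcard.trans_lt (Cardinal.cantor 𝔠)
    exact absurd hsum (ne_of_lt (Cardinal.add_lt_of_lt h2c hMlt hlt))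
  refine hMc.trans (Cardinal.mk_le_of_injective
    (f := fun i : (Mᶜ : Set ι) => (⟨F i.1, i.2⟩ :
      {K : Subfield ℝ // ¬ MeasurableSet {x : ℝ | ∃ y ∈ K, x = y ^ 2}})) ?_)
  intro i j h
  exact Subtype.ext (hFinj (congrArg Subtype.val h))
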